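/- Let Ψ be a highest weight vector of U(B₀) and α = (α_1,...,α_n) a sequence of parameters with t > n a positive integer. If x_t^-(α) Ψ = 0, then for all m ≥ 0 and all positive integers k_1,...,k_n: x_{t+m}^-(α) x_{k_1}^- ··· x_{k_n}^- Ψ = 0, h_{t+m}(α) x_{k_1}^- ··· x_{k_n}^- Ψ = 0, and x_{t+m}^+(α) x_{k_1}^- ··· x_{k_n}^- Ψ = 0. -/

import Mathlib

open scoped BigOperators

/-- A representation of the Borel subalgebra `U(B₀)` of the `sl₂` loop algebra:
operators `x_k^+, h_k` (`k ≥ 0`) and `x_k^-` (`k ≥ 1`, the value of `xm` at `0`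
being irrelevant) on a complex vector space, satisfying the loop relations. -/
structure BorelRep (V : Type*) [AddCommGroup V] [Module ℂ V] where
  xp : ℕ → Module.End ℂ V
  xm : ℕ → Module.End ℂ V
  h : ℕ → Module.End ℂ V
  h_xp : ∀ j k, ⁅h j, xp k⁆ = 2 • xp (j + k)
  h_xm : ∀ j k, 1 ≤ k → ⁅h j, xm k⁆ = -(2 • xm (j + k))
  xp_xm : ∀ j k, 1 ≤ k → ⁅xp j, xm k⁆ = h (j + k)
  h_h : ∀ j k, ⁅h j, h k⁆ = 0
  xp_xp : ∀ j k, ⁅xp j, xp k⁆ = 0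
  xm_xm : ∀ j k, 1 ≤ j → 1 ≤ k → ⁅xm j, xm k⁆ = 0

/-- The `k`-th elementary symmetric polynomial of `α_1, …, α_n`. -/
noncomputable def esymm {n : ℕ} (α : Fin n → ℂ) (k : ℕ) : ℂ :=
  ∑ s ∈ Finset.powersetCard k (Finset.univ : Finset (Fin n)), ∏ i ∈ s, α i

variable {V : Type*} [AddCommGroup V] [Module ℂ V]

/-- `x_m^+(α) = Σ_{k=0}^n (-1)^k e_k(α) x_{m-k}^+`. -/
noncomputable def xpP (B : BorelRep V) {n : ℕ} (α : Fin n → ℂ) (m : ℕ) :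
    Module.End ℂ V :=
  ∑ k ∈ Finset.range (n + 1), ((-1 : ℂ) ^ k * esymm α k) • B.xp (m - k)

/-- `x_m^-(α) = Σ_{k=0}^n (-1)^k e_k(α) x_{m-k}^-`. -/
noncomputable def xmP (B : BorelRep V) {n : ℕ} (α : Fin n → ℂ) (m : ℕ) :
    Module.End ℂ V :=
  ∑ k ∈ Finset.range (n + 1), ((-1 : ℂ) ^ k * esymm α k) • B.xm (m - k)

/-- `h_m(α) = Σ_{k=0}^n (-1)^k e_k(α) h_{m-k}`. -/
noncomputable def hP (B : BorelRep V) {n : ℕ} (α : Fin n → ℂ) (m : ℕ) :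
    Module.End ℂ V :=
  ∑ k ∈ Finset.range (n + 1), ((-1 : ℂ) ^ k * esymm α k) • B.h (m - k)

/-- The cyclic submodule `U(B₀)Ψ`: the span of all vectors obtained from `Ψ`
by words in the generators. -/
def cyclic (B : BorelRep V) (Ψ : V) : Submodule ℂ V :=
  Submodule.span ℂ {v | ∃ w : List (Module.End ℂ V),
    (∀ f ∈ w, (∃ k, f = B.xp k) ∨ (∃ k, 1 ≤ k ∧ f = B.xm k) ∨ (∃ k, f = B.h k)) ∧
    v = w.prod Ψ}

section Aux

variable (B : BorelRep V) {n : ℕ} (α : Fin n → ℂ)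

lemma lie_sum' {ι : Type*} (x : Module.End ℂ V) (s : Finset ι)
    (f : ι → Module.End ℂ V) : ⁅x, ∑ i ∈ s, f i⁆ = ∑ i ∈ s, ⁅x, f i⁆ := by
  simp [Ring.lie_def, Finset.mul_sum, Finset.sum_mul, Finset.sum_sub_distrib]

lemma sum_lie' {ι : Type*} (x : Module.End ℂ V) (s : Finset ι)
    (f : ι → Module.End ℂ V) : ⁅∑ i ∈ s, f i, x⁆ = ∑ i ∈ s, ⁅f i, x⁆ := by
  simp [Ring.lie_def, Finset.mul_sum, Finset.sum_mul, Finset.sum_sub_distrib]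

lemma end_lie_apply (f g : Module.End ℂ V) (v : V) :
    ⁅f, g⁆ v = f (g v) - g (f v) := by
  simp [Ring.lie_def, LinearMap.sub_apply, Module.End.mul_apply]

lemma end_lie_smul' (c : ℂ) (f g : Module.End ℂ V) : ⁅f, c • g⁆ = c • ⁅f, g⁆ := by
  simp only [Ring.lie_def, mul_smul_comm, smul_mul_assoc, smul_sub]

lemma end_smul_lie' (c : ℂ) (f g : Module.End ℂ V) : ⁅c • f, g⁆ = c • ⁅f, g⁆ := by
  simp only [Ring.lie_def, mul_smul_comm, smul_mul_assoc, smul_sub]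

lemma lie_h_xmP (j m : ℕ) (hm : n < m) :
    ⁅B.h j, xmP B α m⁆ = -(2 • xmP B α (j + m)) := by
  unfold xmP
  rw [lie_sum', Finset.smul_sum, ← Finset.sum_neg_distrib]
  refine Finset.sum_congr rfl fun k hk => ?_
  rw [Finset.mem_range, Nat.lt_succ_iff] at hk
  rw [end_lie_smul' , B.h_xm j (m - k) (by omega), smul_neg, smul_comm,
    show j + (m - k) = (j + m) - k by omega]

lemma lie_xp_xmP (j m : ℕ) (hm : n < m) :
    ⁅B.xp j, xmP B α m⁆ = hP B α (j + m) := by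
  unfold xmP hP
  rw [lie_sum']
  refine Finset.sum_congr rfl fun k hk => ?_
  rw [Finset.mem_range, Nat.lt_succ_iff] at hk
  rw [end_lie_smul' , B.xp_xm j (m - k) (by omega),
    show j + (m - k) = (j + m) - k by omega]

lemma lie_hP_xm (m k : ℕ) (hm : n < m) (hk : 1 ≤ k) :
    ⁅hP B α m, B.xm k⁆ = -(2 • xmP B α (m + k)) := by
  unfold hP xmP
  rw [sum_lie', Finset.smul_sum, ← Finset.sum_neg_distrib]
  refine Finset.sum_congr rfl fun j hj => ?_
  rw [Finset.mem_range, Nat.lt_succ_iff] at hj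
  rw [end_smul_lie' , B.h_xm (m - j) k hk, smul_neg, smul_comm,
    show (m - j) + k = (m + k) - j by omega]

lemma lie_xpP_xm (m k : ℕ) (hm : n < m) (hk : 1 ≤ k) :
    ⁅xpP B α m, B.xm k⁆ = hP B α (m + k) := by
  unfold xpP hP
  rw [sum_lie']
  refine Finset.sum_congr rfl fun j hj => ?_
  rw [Finset.mem_range, Nat.lt_succ_iff] at hj
  rw [end_smul_lie' , B.xp_xm (m - j) k hk,
    show (m - j) + k = (m + k) - j by omega]

lemma xm_comm_xmP (k m : ℕ) (hk : 1 ≤ k) (hm : n < m) :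
    B.xm k * xmP B α m = xmP B α m * B.xm k := by
  have h : ⁅B.xm k, xmP B α m⁆ = 0 := by
    unfold xmP
    rw [lie_sum']
    refine Finset.sum_eq_zero fun j hj => ?_
    rw [Finset.mem_range, Nat.lt_succ_iff] at hj
    rw [end_lie_smul' , B.xm_xm k (m - j) hk (by omega), smul_zero]
  rwa [Ring.lie_def, sub_eq_zero] at h

lemma prod_comm_xmP (L : List ℕ) (hL : ∀ k ∈ L, 1 ≤ k) (m : ℕ) (hm : n < m)
    (v : V) :
    xmP B α m ((L.map B.xm).prod v) = (L.map B.xm).prod (xmP B α m v) := by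
  induction L with
  | nil => simp
  | cons a L ih =>
    have ha : 1 ≤ a := hL a (by simp)
    simp only [List.map_cons, List.prod_cons, Module.End.mul_apply]
    have h1 : xmP B α m (B.xm a ((L.map B.xm).prod v))
        = B.xm a (xmP B α m ((L.map B.xm).prod v)) := by
      have := congrArg (fun f : Module.End ℂ V => f ((L.map B.xm).prod v))
        (xm_comm_xmP B α a m ha hm)
      simpa [Module.End.mul_apply] using this.symm
    rw [h1, ih fun k hk => hL k (List.mem_cons_of_mem _ hk)]

variable (Ψ : V) (d : ℕ → ℂ) (t : ℕ)

lemma xpP_psi (hxpΨ : ∀ k, B.xp k Ψ = 0) (m : ℕ) : xpP B α m Ψ = 0 := by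
  simp [xpP, LinearMap.sum_apply, LinearMap.smul_apply, hxpΨ]

lemma xmP_psi (ht : n < t) (hhΨ : ∀ k, B.h k Ψ = d k • Ψ)
    (h0 : xmP B α t Ψ = 0) (m : ℕ) : xmP B α (t + m) Ψ = 0 := by
  rcases Nat.eq_zero_or_pos m with hm | hm
  · simpa [hm] using h0
  · have hL : ⁅B.h m, xmP B α t⁆ Ψ = 0 := by
      rw [end_lie_apply, h0, hhΨ, map_zero, map_smul, h0, smul_zero, sub_zero]
    rw [lie_h_xmP B α m t ht, LinearMap.neg_apply, neg_eq_zero, two_nsmul,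
      LinearMap.add_apply] at hL
    have hz : (2 : ℂ) • xmP B α (m + t) Ψ = 0 := by rw [two_smul]; exact hL
    have hw := (smul_eq_zero.mp hz).resolve_left (by norm_num)
    rw [Nat.add_comm t m]
    exact hw

lemma hP_psi (ht : n < t) (hxpΨ : ∀ k, B.xp k Ψ = 0)
    (hhΨ : ∀ k, B.h k Ψ = d k • Ψ) (h0 : xmP B α t Ψ = 0) (m : ℕ) :
    hP B α (t + m) Ψ = 0 := by
  have h1 := congrArg (fun f : Module.End ℂ V => f Ψ)
    (lie_xp_xmP B α 0 (t + m) (by omega))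
  simp only [end_lie_apply] at h1
  rw [xmP_psi B α Ψ d t ht hhΨ h0 m, hxpΨ, map_zero, map_zero, sub_zero,
    Nat.zero_add] at h1
  exact h1.symm

lemma hP_prod (ht : n < t) (hxpΨ : ∀ k, B.xp k Ψ = 0)
    (hhΨ : ∀ k, B.h k Ψ = d k • Ψ) (h0 : xmP B α t Ψ = 0) :
    ∀ (L : List ℕ), (∀ k ∈ L, 1 ≤ k) → ∀ m,
      hP B α (t + m) ((L.map B.xm).prod Ψ) = 0 := by
  intro L
  induction L with
  | nil =>
    intro _ m
    simpa using hP_psi B α Ψ d t ht hxpΨ hhΨ h0 m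
  | cons a L ih =>
    intro hL m
    have ha : 1 ≤ a := hL a (by simp)
    have hLt : ∀ k ∈ L, 1 ≤ k := fun k hk => hL k (List.mem_cons_of_mem _ hk)
    simp only [List.map_cons, List.prod_cons, Module.End.mul_apply]
    have key : hP B α (t + m) (B.xm a ((L.map B.xm).prod Ψ))
        = ⁅hP B α (t + m), B.xm a⁆ ((L.map B.xm).prod Ψ)
          + B.xm a (hP B α (t + m) ((L.map B.xm).prod Ψ)) := by
      rw [end_lie_apply]; abel
    rw [key, ih hLt m, map_zero, add_zero,
      lie_hP_xm B α (t + m) a (by omega) ha]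
    have h2 : xmP B α (t + m + a) ((L.map B.xm).prod Ψ) = 0 := by
      rw [prod_comm_xmP B α L hLt _ (by omega),
        show t + m + a = t + (m + a) by ring,
        xmP_psi B α Ψ d t ht hhΨ h0 (m + a), map_zero]
    simp [h2]

lemma xpP_prod (ht : n < t) (hxpΨ : ∀ k, B.xp k Ψ = 0)
    (hhΨ : ∀ k, B.h k Ψ = d k • Ψ) (h0 : xmP B α t Ψ = 0) :
    ∀ (L : List ℕ), (∀ k ∈ L, 1 ≤ k) → ∀ m,
      xpP B α (t + m) ((L.map B.xm).prod Ψ) = 0 := by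
  intro L
  induction L with
  | nil =>
    intro _ m
    simpa using xpP_psi B α Ψ hxpΨ (t + m)
  | cons a L ih =>
    intro hL m
    have ha : 1 ≤ a := hL a (by simp)
    have hLt : ∀ k ∈ L, 1 ≤ k := fun k hk => hL k (List.mem_cons_of_mem _ hk)
    simp only [List.map_cons, List.prod_cons, Module.End.mul_apply]
    have key : xpP B α (t + m) (B.xm a ((L.map B.xm).prod Ψ))
        = ⁅xpP B α (t + m), B.xm a⁆ ((L.map B.xm).prod Ψ)
          + B.xm a (xpP B α (t + m) ((L.map B.xm).prod Ψ)) := by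
      rw [end_lie_apply]; abel
    rw [key, ih hLt m, map_zero, add_zero,
      lie_xpP_xm B α (t + m) a (by omega) ha,
      show t + m + a = t + (m + a) by ring,
      hP_prod B α Ψ d t ht hxpΨ hhΨ h0 L hLt (m + a)]

end Aux

/-- If `Ψ` is a highest weight vector of `U(B₀)` and `x_t^-(α) Ψ = 0` for some
`t > n`, then for all `m ≥ 0` and all positive integers `k_1, …, k_n`,
`x_{t+m}^-(α)`, `h_{t+m}(α)` and `x_{t+m}^+(α)` annihilate
`x_{k_1}^- ⋯ x_{k_n}^- Ψ`. -/
theorem stmt9 (B : BorelRep V) (Ψ : V) (d : ℕ → ℂ)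
    (hxpΨ : ∀ k, B.xp k Ψ = 0) (hhΨ : ∀ k, B.h k Ψ = d k • Ψ)
    {n : ℕ} (α : Fin n → ℂ) (t : ℕ) (ht : n < t) (h0 : xmP B α t Ψ = 0) :
    ∀ m : ℕ, ∀ k : Fin n → ℕ, (∀ i, 1 ≤ k i) →
      xmP B α (t + m) (((List.ofFn fun i => B.xm (k i)).prod) Ψ) = 0 ∧
      hP B α (t + m) (((List.ofFn fun i => B.xm (k i)).prod) Ψ) = 0 ∧
      xpP B α (t + m) (((List.ofFn fun i => B.xm (k i)).prod) Ψ) = 0 := by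
  intro m k hk
  have hmap : (List.ofFn fun i => B.xm (k i)) = (List.ofFn k).map B.xm := by
    rw [List.map_ofFn]
    rfl
  have hL : ∀ j ∈ List.ofFn k, 1 ≤ j := by
    intro j hj
    rw [List.mem_ofFn] at hj
    obtain ⟨i, hi⟩ := hj
    exact hi ▸ hk i
  rw [hmap]
  refine ⟨?_, hP_prod B α Ψ d t ht hxpΨ hhΨ h0 _ hL m,
    xpP_prod B α Ψ d t ht hxpΨ hhΨ h0 _ hL m⟩
  rw [prod_comm_xmP B α _ hL _ (by omega),
    xmP_psi B α Ψ d t ht hhΨ h0 m, map_zero]
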